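/- Fix δ ∈ (0,1). There exist constants C > 0 and C' > 0, depending only on δ, such that for every positive integer m and every nonnegative integer t with t ≤ (1 − δ)·m the following holds: if w_1, …, w_m are i.i.d. standard normal N(0,1) random variables and w²_{(1)} ≤ w²_{(2)} ≤ ⋯ ≤ w²_{(m)} denote the order statistics of w_1², …, w_m², then Pr( w²_{(1)} + w²_{(2)} + ⋯ + w²_{(m−t)} > C·m ) ≥ 1 − C'/m. Equivalently, with probability at least 1 − C'/m, every subset S ⊆ {1,…,m} with |S| = m − t of minimal sum satisfies Σ_{i∈S} w_i² > C·m. (Lemma: partial sum of the smallest squared Gaussians.) -/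

import Mathlib

open MeasureTheory ProbabilityTheory Finset Real
open scoped NNReal ENNReal

lemma gauss_small (a : ℝ) (ha : 0 ≤ a) :
    (gaussianReal 0 1) {x : ℝ | x ^ 2 < a ^ 2} ≤ ENNReal.ofReal (2 * a) := by
  have h1 : {x : ℝ | x ^ 2 < a ^ 2} ⊆ Set.Ioo (-a) a := by
    intro x hx
    simp only [Set.mem_setOf_eq] at hx
    constructor <;> nlinarith [abs_nonneg x, sq_abs x, le_abs_self x, neg_abs_le x]
  have hpdf : ∀ x : ℝ, gaussianPDF 0 1 x ≤ 1 := by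
    intro x
    rw [gaussianPDF]
    refine ENNReal.ofReal_le_one.mpr ?_
    rw [gaussianPDFReal]
    have h2 : Real.exp (-(x - 0) ^ 2 / (2 * ((1:ℝ≥0):ℝ))) ≤ 1 := by
      rw [Real.exp_le_one_iff]
      have h0 : (0:ℝ) ≤ (x - 0) ^ 2 := sq_nonneg _
      have h0' : ((1:ℝ≥0):ℝ) = 1 := by norm_num
      rw [h0']
      nlinarith
    have h3 : (1:ℝ) ≤ √(2 * π * ((1:ℝ≥0):ℝ)) := by
      rw [show (2 * π * ((1:ℝ≥0):ℝ)) = 2 * π by norm_num]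
      nlinarith [Real.sq_sqrt (by positivity : (0:ℝ) ≤ 2 * π), Real.sqrt_nonneg (2*π),
        Real.pi_gt_three]
    calc (√(2 * π * ((1:ℝ≥0):ℝ)))⁻¹ * rexp (-(x - 0) ^ 2 / (2 * ((1:ℝ≥0):ℝ)))
        ≤ 1 * 1 := by
          apply mul_le_mul _ h2 (Real.exp_nonneg _) (by norm_num)
          exact inv_le_one_of_one_le₀ h3
      _ = 1 := by norm_num
  calc (gaussianReal 0 1) {x : ℝ | x ^ 2 < a ^ 2}
      ≤ (gaussianReal 0 1) (Set.Ioo (-a) a) := measure_mono h1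
    _ = ∫⁻ x in Set.Ioo (-a) a, gaussianPDF 0 1 x := by
        rw [gaussianReal_apply 0 one_ne_zero]
    _ ≤ ∫⁻ _ in Set.Ioo (-a) a, 1 := lintegral_mono fun x => hpdf x
    _ = volume (Set.Ioo (-a) a) := setLIntegral_one _
    _ = ENNReal.ofReal (2 * a) := by rw [Real.volume_Ioo]; ring_nf

set_option maxHeartbeats 1000000

/-- **Lemma (partial sum of the smallest squared Gaussians).**
Fix `δ ∈ (0,1)`. There are constants `C, C' > 0` depending only on `δ` such that
for all `m ≥ 1` and `t ≤ (1 − δ)·m`: if `w_1, …, w_m` are i.i.d. standard Gaussians,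
then with probability at least `1 − C'/m`, the sum of the `m − t` smallest among
`w_1², …, w_m²` exceeds `C·m`; equivalently, every subset `S` of size `m − t`
satisfies `∑_{i ∈ S} w_i² > C·m`. -/
theorem partial_sum_smallest_squared_gaussians
    (δ : ℝ) (hδ0 : 0 < δ) (hδ1 : δ < 1) :
    ∃ C C' : ℝ, 0 < C ∧ 0 < C' ∧
      ∀ (m t : ℕ), 0 < m → (t : ℝ) ≤ (1 - δ) * m →
      ∀ (Ω : Type) (_ : MeasurableSpace Ω) (P : Measure Ω), IsProbabilityMeasure P →
      ∀ (w : Fin m → Ω → ℝ),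
        (∀ i, Measurable (w i)) →
        (∀ i, Measure.map (w i) P = gaussianReal 0 1) →
        iIndepFun w P →
      P {ω | ∀ S : Finset (Fin m), S.card = m - t → C * m < ∑ i ∈ S, w i ω ^ 2}
        ≥ 1 - ENNReal.ofReal (C' / m) := by
  classical
  set a : ℝ := δ / 8 with ha_def
  set ε : ℝ := a ^ 2 with hε_def
  have hε : 0 < ε := by positivity
  refine ⟨ε * δ / 2, 16 / δ ^ 2, by positivity, by positivity, ?_⟩
  intro m t hm ht Ω mΩ P hP w hw hmap hind
  set A : Set ℝ := {x | x ^ 2 < ε} with hA_def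
  have hA : MeasurableSet A := measurableSet_lt (by measurability) measurable_const
  set p : ℝ := ((gaussianReal 0 1) A).toReal with hp_def
  have hp0 : 0 ≤ p := ENNReal.toReal_nonneg
  have hp_le : p ≤ δ / 4 := by
    have := gauss_small a (by positivity)
    have h2a : 2 * a = δ / 4 := by rw [ha_def]; ring
    exact ENNReal.toReal_le_of_le_ofReal (by positivity) (by rw [← h2a]; exact this)
  -- the indicator random variables
  set X : Fin m → Ω → ℝ := fun i => (A.indicator (fun _ => (1:ℝ))) ∘ w i with hX_def
  have hXmeas : ∀ i, Measurable (X i) :=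
    fun i => (measurable_const.indicator hA).comp (hw i)
  have hX01 : ∀ i ω, X i ω ∈ Set.Icc (0:ℝ) 1 := by
    intro i ω
    by_cases h : w i ω ∈ A <;> simp [hX_def, Set.indicator_apply, h]
  have hXL2 : ∀ i, MemLp (X i) 2 P :=
    fun i => memLp_of_bounded (ae_of_all _ (hX01 i)) (hXmeas i).aestronglyMeasurable 2
  have hEX : ∀ i, P[X i] = p := by
    intro i
    have h1 : P[X i] = ∫ x, A.indicator (fun _ => (1:ℝ)) x ∂(Measure.map (w i) P) := by
      rw [integral_map (hw i).aemeasurable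
        (measurable_const.indicator hA).aestronglyMeasurable]
      rfl
    rw [h1, hmap i, hp_def]
    exact integral_indicator_one hA
  have hXsq : ∀ i, (X i) ^ 2 = X i := by
    intro i
    funext ω
    simp only [Pi.pow_apply, hX_def, Function.comp_apply, Set.indicator_apply]
    by_cases h : w i ω ∈ A <;> simp [h]
  have hVar : ∀ i, variance (X i) P ≤ p := by
    intro i
    rw [variance_eq_sub (hXL2 i), hXsq i, hEX i]
    nlinarith
  have hXind : iIndepFun X P :=
    hind.comp (fun _ => A.indicator (fun _ => (1:ℝ)))
      (fun _ => measurable_const.indicator hA)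
  -- the counting variable
  set N : Ω → ℝ := ∑ i : Fin m, X i with hN_def
  have hNapp : ∀ ω, N ω = ∑ i : Fin m, X i ω := by
    intro ω; rw [hN_def]; exact Finset.sum_apply ω univ X
  have hNmeas : Measurable N := by
    have h := Finset.univ.measurable_sum (fun i (_ : i ∈ univ) => hXmeas i)
    rwa [show (fun a => ∑ i : Fin m, X i a) = N from (funext hNapp).symm] at h
  have hNL2 : MemLp N 2 P := memLp_finset_sum' _ (fun i _ => hXL2 i)
  have hEN : P[N] = m * p := by
    have : P[N] = ∑ i : Fin m, P[X i] := by
      rw [hN_def]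
      rw [show (∑ i : Fin m, X i) = fun ω => ∑ i : Fin m, X i ω from
        funext fun ω => Finset.sum_apply ω univ X]
      exact integral_finset_sum _ (fun i _ => (hXL2 i).integrable one_le_two)
    rw [this]
    simp [hEX, mul_comm]
  have hVarN : variance N P ≤ m * p := by
    rw [hN_def, IndepFun.variance_sum (fun i _ => hXL2 i)
      (fun i _ j _ hij => hXind.indepFun hij)]
    calc ∑ i : Fin m, variance (X i) P ≤ ∑ _i : Fin m, p := Finset.sum_le_sum fun i _ => hVar i
      _ = m * p := by simp [mul_comm]
  -- Chebyshev
  set c : ℝ := δ * m / 4 with hc_def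
  have hm' : (0:ℝ) < m := by exact_mod_cast hm
  have hc : 0 < c := by positivity
  have hcheb := meas_ge_le_variance_div_sq (μ := P) hNL2 hc
  set Bad : Set Ω := {ω | c ≤ |N ω - P[N]|} with hBad_def
  have hbad : P Bad ≤ ENNReal.ofReal (16 / δ ^ 2 / m) := by
    refine hcheb.trans (ENNReal.ofReal_le_ofReal ?_)
    have hceq : c ^ 2 = δ ^ 2 * m ^ 2 / 16 := by rw [hc_def]; ring
    have hδ' : δ ≠ 0 := ne_of_gt hδ0
    have hm'' : (m:ℝ) ≠ 0 := ne_of_gt hm'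
    calc variance N P / c ^ 2 ≤ (m * p) / c ^ 2 :=
          div_le_div_of_nonneg_right hVarN (by positivity)
      _ = 16 * p / (δ ^ 2 * m) := by rw [hceq]; field_simp
      _ ≤ 16 / (δ ^ 2 * m) := by
          apply div_le_div₀ (by norm_num) (by nlinarith) (by positivity) le_rfl
      _ = 16 / δ ^ 2 / m := by rw [div_div]
  have hBadMeas : MeasurableSet Bad :=
    measurableSet_le measurable_const ((hNmeas.sub measurable_const).abs)
  have hgoodP : P Badᶜ ≥ 1 - ENNReal.ofReal (16 / δ ^ 2 / m) := by
    rw [prob_compl_eq_one_sub hBadMeas]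
    exact tsub_le_tsub_left hbad 1
  refine le_trans hgoodP (measure_mono ?_)
  -- pointwise argument
  intro ω hω
  simp only [hBad_def, Set.mem_compl_iff, Set.mem_setOf_eq, not_le] at hω
  intro S hS
  have hNω : N ω < δ * m / 2 := by
    have h1 : N ω - P[N] < c := (le_abs_self _).trans_lt hω
    have h2 : P[N] ≤ m * (δ/4) := by
      rw [hEN]; exact mul_le_mul_of_nonneg_left hp_le (by positivity)
    rw [hc_def] at h1
    nlinarith
  have htm : t ≤ m := by
    have : (t:ℝ) < m := by nlinarith
    exact_mod_cast this.le
  have hcardS : δ * m ≤ (S.card : ℝ) := by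
    rw [hS]
    rw [Nat.cast_sub htm]
    nlinarith
  set T : Finset (Fin m) := S.filter (fun i => w i ω ^ 2 < ε) with hT_def
  have hTS : T ⊆ S := Finset.filter_subset _ _
  have hT_le_N : (T.card : ℝ) ≤ N ω := by
    rw [hNapp]
    have h1 : ∀ i ∈ T, X i ω = 1 := by
      intro i hi
      rw [hT_def, Finset.mem_filter] at hi
      simp [hX_def, Set.indicator_apply, hA_def, hi.2]
    calc (T.card : ℝ) = ∑ i ∈ T, X i ω := by
          rw [Finset.sum_congr rfl h1]; simp
      _ ≤ ∑ i : Fin m, X i ω :=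
          Finset.sum_le_sum_of_subset_of_nonneg (Finset.subset_univ T)
            (fun i _ _ => (hX01 i ω).1)
  have hgood : δ * m / 2 < ((S \ T).card : ℝ) := by
    rw [Finset.card_sdiff_of_subset hTS, Nat.cast_sub (Finset.card_le_card hTS)]
    linarith
  have hεle : ∀ i ∈ S \ T, ε ≤ w i ω ^ 2 := by
    intro i hi
    rw [Finset.mem_sdiff] at hi
    by_contra h
    push_neg at h
    exact hi.2 (Finset.mem_filter.mpr ⟨hi.1, h⟩)
  calc ε * δ / 2 * m = ε * (δ * m / 2) := by ring
    _ < ε * ((S \ T).card : ℝ) := by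
        exact mul_lt_mul_of_pos_left hgood hε
    _ = ∑ _i ∈ S \ T, ε := by rw [Finset.sum_const]; simp [mul_comm]
    _ ≤ ∑ i ∈ S \ T, w i ω ^ 2 := Finset.sum_le_sum hεle
    _ ≤ ∑ i ∈ S, w i ω ^ 2 :=
        Finset.sum_le_sum_of_subset_of_nonneg (Finset.sdiff_subset)
          (fun i _ _ => sq_nonneg _)
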